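/- Suppose Λ(τ) < ∞ for every τ ∈ ℝ. Then Λ : ℝ → ℝ is differentiable and satisfies the differential equation 1 + κ(τ)Λ(τ) + Λ'(τ) = 0 for all τ ∈ ℝ. -/

import Mathlib

open MeasureTheory

/-- Lemma (Lemma 5.2, Eq. (biw)): if `Λ(τ) = ∫_τ^∞ exp(∫_τ^ρ κ(s) ds) dρ` is finite
for every `τ`, then `Λ` is differentiable and `1 + κ Λ + Λ' = 0`. -/
theorem statement13 (κ : ℝ → ℝ) (hκ : Continuous κ)
    (h : ∀ τ : ℝ, IntegrableOn (fun ρ => Real.exp (∫ s in τ..ρ, κ s)) (Set.Ioi τ)) :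
    ∀ τ : ℝ,
      HasDerivAt (fun τ' => ∫ ρ in Set.Ioi τ', Real.exp (∫ s in τ'..ρ, κ s))
        (-(1 + κ τ * ∫ ρ in Set.Ioi τ, Real.exp (∫ s in τ..ρ, κ s))) τ := by
  intro τ₀
  set F : ℝ → ℝ := fun τ => ∫ s in (0:ℝ)..τ, κ s with hFdef
  have hFderiv : ∀ τ, HasDerivAt F (κ τ) τ := fun τ =>
    (hκ.integral_hasStrictDerivAt 0 τ).hasDerivAt
  have hFcont : Continuous F := by
    apply continuous_iff_continuousAt.2
    intro x
    exact (hFderiv x).continuousAt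
  have hsplit : ∀ τ ρ : ℝ, (∫ s in τ..ρ, κ s) = F ρ - F τ := by
    intro τ ρ
    rw [hFdef]
    rw [intervalIntegral.integral_interval_sub_left (hκ.intervalIntegrable _ _)
      (hκ.intervalIntegrable _ _)]
  set g : ℝ → ℝ := fun ρ => Real.exp (F ρ) with hgdef
  have hgcont : Continuous g := Real.continuous_exp.comp hFcont
  have hgInt : ∀ τ, IntegrableOn g (Set.Ioi τ) := by
    intro τ
    have h1 : IntegrableOn (fun ρ => Real.exp (F τ) *
        Real.exp (∫ s in τ..ρ, κ s)) (Set.Ioi τ) := (h τ).const_mul _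
    refine h1.congr_fun ?_ measurableSet_Ioi
    intro ρ _
    simp only [hsplit, ← Real.exp_add, hgdef]
    ring_nf
  set G : ℝ → ℝ := fun τ => ∫ ρ in Set.Ioi τ, g ρ with hGdef
  have hkey : ∀ τ ∈ Set.Ioi (τ₀ - 1), G τ = G (τ₀ - 1) - ∫ x in (τ₀-1)..τ, g x := by
    intro τ hτ
    have hle : τ₀ - 1 ≤ τ := le_of_lt hτ
    have hunion : Set.Ioc (τ₀-1) τ ∪ Set.Ioi τ = Set.Ioi (τ₀-1) :=
      Set.Ioc_union_Ioi_eq_Ioi hle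
    have hdisj : Disjoint (Set.Ioc (τ₀-1) τ) (Set.Ioi τ) := by
      apply Set.disjoint_left.2
      intro x hx hx'
      exact absurd hx.2 (not_le.2 hx')
    have h2 : (∫ x in Set.Ioi (τ₀-1), g x) =
        (∫ x in Set.Ioc (τ₀-1) τ, g x) + ∫ x in Set.Ioi τ, g x := by
      rw [← hunion]
      exact setIntegral_union hdisj measurableSet_Ioi
        ((hgInt (τ₀-1)).mono_set (by rw [← hunion]; exact Set.subset_union_left))
        (hgInt τ)
    rw [intervalIntegral.integral_of_le hle]
    simp only [hGdef]
    linarith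
  have hGderiv : HasDerivAt G (-(g τ₀)) τ₀ := by
    have h3 : HasDerivAt (fun τ => G (τ₀ - 1) - ∫ x in (τ₀-1)..τ, g x) (-(g τ₀)) τ₀ := by
      have := (hgcont.integral_hasStrictDerivAt (τ₀-1) τ₀).hasDerivAt
      simpa using this.const_sub (G (τ₀ - 1))
    refine h3.congr_of_eventuallyEq ?_
    filter_upwards [Ioi_mem_nhds (by linarith : τ₀ - 1 < τ₀)] with τ hτ
    exact hkey τ hτ
  have hexp : HasDerivAt (fun τ => Real.exp (-(F τ)))
      (Real.exp (-(F τ₀)) * (-(κ τ₀))) τ₀ := ((hFderiv τ₀).neg).exp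
  have hprod := hexp.mul hGderiv
  have hfun : (fun τ' => ∫ ρ in Set.Ioi τ', Real.exp (∫ s in τ'..ρ, κ s)) =
      fun τ => Real.exp (-(F τ)) * G τ := by
    funext τ
    simp only [hGdef, ← integral_const_mul]
    apply setIntegral_congr_fun measurableSet_Ioi
    intro ρ _
    simp only [hsplit, hgdef, ← Real.exp_add]
    ring_nf
  rw [hfun]
  convert hprod using 1
  case e'_4 => rfl
  case e'_5 => rfl
  case e'_8 => rfl
  have hΛ : (∫ ρ in Set.Ioi τ₀, Real.exp (∫ s in τ₀..ρ, κ s)) =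
      Real.exp (-(F τ₀)) * G τ₀ := congrFun hfun τ₀
  rw [hΛ]
  have : Real.exp (-(F τ₀)) * g τ₀ = 1 := by
    rw [hgdef, ← Real.exp_add]; simp
  nlinarith [this]
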